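/- Suppose that for every i ∈ A the value (e^{x_i}/∑_{j∈A} e^{x_j})·(1−(n−k)u) is at least u. Then the vector b(x) defined by b_i(x) = (e^{x_i}/∑_{j∈A} e^{x_j})·(1−(n−k)u) for i ∈ A and b_i(x) = u for i ∉ A is the unique minimizer of the function b ↦ ∑_{i=1}^n b_i ln(b_i) − xᵀb over the set {b ∈ ℝⁿ : ∑_{i=1}^n b_i = 1 and b_i ≥ u for all i}. -/
import Mathlib


open Real Finset

lemma gap_le {s t : ℝ} (hs : 0 < s) (ht : 0 < t) :
    (Real.log s + 1) * (t - s) ≤ t * Real.log t - s * Real.log s := by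
  have h1 : Real.log (s / t) ≤ s / t - 1 := Real.log_le_sub_one_of_pos (by positivity)
  rw [Real.log_div hs.ne' ht.ne'] at h1
  have h2 : t * (Real.log s - Real.log t) ≤ t * (s / t - 1) :=
    mul_le_mul_of_nonneg_left h1 ht.le
  have h3 : t * (s / t - 1) = s - t := by field_simp
  nlinarith

lemma gap_lt {s t : ℝ} (hs : 0 < s) (ht : 0 < t) (hne : t ≠ s) :
    (Real.log s + 1) * (t - s) < t * Real.log t - s * Real.log s := by
  have h1 : Real.log (s / t) < s / t - 1 := by
    apply Real.log_lt_sub_one_of_pos (by positivity)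
    intro h; apply hne; field_simp at h; linarith
  rw [Real.log_div hs.ne' ht.ne'] at h1
  have h2 : t * (Real.log s - Real.log t) < t * (s / t - 1) :=
    (mul_lt_mul_iff_right₀ ht).mpr h1
  have h3 : t * (s / t - 1) = s - t := by field_simp
  nlinarith

set_option maxHeartbeats 1000000 in
/-- **Bounded Softmax theorem (uniqueness of the minimizer).**
Let `n ≥ 1`, `x ∈ ℝⁿ`, `0 < u < 1/n`, `A = {i : softmax_i(x) ≥ u}` and `k = #A`.
Suppose that for every `i ∈ A` the value `(e^{x_i}/∑_{j∈A} e^{x_j})·(1−(n−k)u)` is at least `u`.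
Then the vector `b` defined by `b_i = (e^{x_i}/∑_{j∈A} e^{x_j})·(1−(n−k)u)` for `i ∈ A` and
`b_i = u` otherwise is the unique minimizer of `b ↦ ∑ᵢ bᵢ ln(bᵢ) − xᵀb` over
`{b : ∑ᵢ bᵢ = 1 and bᵢ ≥ u for all i}`. -/
theorem bounded_softmax_unique_minimizer
    (n : ℕ) (hn : 1 ≤ n) (x : Fin n → ℝ) (u : ℝ) (hu0 : 0 < u) (hu1 : u < 1 / n)
    (A : Finset (Fin n))
    (hA : A = Finset.univ.filter (fun i => u ≤ Real.exp (x i) / ∑ j, Real.exp (x j)))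
    (k : ℕ) (hk : k = A.card)
    (b : Fin n → ℝ)
    (hb : ∀ i, b i = if i ∈ A then
      (Real.exp (x i) / ∑ j ∈ A, Real.exp (x j)) * (1 - ((n : ℝ) - (k : ℝ)) * u) else u)
    (hge : ∀ i ∈ A,
      u ≤ (Real.exp (x i) / ∑ j ∈ A, Real.exp (x j)) * (1 - ((n : ℝ) - (k : ℝ)) * u)) :
    ((∑ i, b i = 1 ∧ ∀ i, u ≤ b i) ∧
      (∀ c : Fin n → ℝ, (∑ i, c i = 1 ∧ ∀ i, u ≤ c i) →
        (∑ i, b i * Real.log (b i)) - (∑ i, x i * b i)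
          ≤ (∑ i, c i * Real.log (c i)) - (∑ i, x i * c i))) ∧
    (∀ c : Fin n → ℝ, (∑ i, c i = 1 ∧ ∀ i, u ≤ c i) →
      (∀ d : Fin n → ℝ, (∑ i, d i = 1 ∧ ∀ i, u ≤ d i) →
        (∑ i, c i * Real.log (c i)) - (∑ i, x i * c i)
          ≤ (∑ i, d i * Real.log (d i)) - (∑ i, x i * d i)) →
      c = b) := by
  have hn' : (0:ℝ) < n := by exact_mod_cast hn
  have hnu : (n:ℝ) * u < 1 := by
    have := (lt_div_iff₀ hn').mp hu1; linarith
  haveI : Nonempty (Fin n) := ⟨⟨0, hn⟩⟩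
  set T : ℝ := ∑ j, Real.exp (x j) with hT
  have hT0 : 0 < T := Finset.sum_pos (fun i _ => Real.exp_pos _) Finset.univ_nonempty
  -- A is nonempty
  have hAne : A.Nonempty := by
    by_contra h
    rw [Finset.not_nonempty_iff_eq_empty] at h
    have hall : ∀ i : Fin n, Real.exp (x i) < u * T := by
      intro i
      have : i ∉ A := by rw [h]; exact Finset.notMem_empty i
      rw [hA, Finset.mem_filter] at this
      push_neg at this
      have h2 := this (Finset.mem_univ i)
      rw [div_lt_iff₀ hT0] at h2
      exact h2
    have hlt : T < ∑ _i : Fin n, u * T :=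
      Finset.sum_lt_sum_of_nonempty Finset.univ_nonempty (fun i _ => hall i)
    rw [Finset.sum_const, Finset.card_univ, Fintype.card_fin, nsmul_eq_mul] at hlt
    nlinarith
  set S : ℝ := ∑ j ∈ A, Real.exp (x j) with hS
  have hS0 : 0 < S := Finset.sum_pos (fun i _ => Real.exp_pos _) hAne
  have hkn : (k:ℝ) ≤ n := by
    rw [hk]
    exact_mod_cast (Finset.card_le_univ A).trans_eq (by simp)
  have hk0 : (0:ℝ) ≤ k := Nat.cast_nonneg k
  set Q : ℝ := 1 - ((n:ℝ) - (k:ℝ)) * u with hQdef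
  have hQ0 : 0 < Q := by
    have : ((n:ℝ) - k) * u ≤ (n:ℝ) * u := by nlinarith
    simp only [hQdef]; linarith
  -- b is positive and ≥ u
  have hbu : ∀ i, u ≤ b i := by
    intro i; rw [hb i]; split
    · exact hge i ‹_›
    · exact le_refl u
  have hbpos : ∀ i, 0 < b i := fun i => lt_of_lt_of_le hu0 (hbu i)
  -- sum of b is 1
  have hcardc : (Aᶜ.card : ℝ) = (n:ℝ) - k := by
    rw [Finset.card_compl, Fintype.card_fin, hk]
    have : A.card ≤ n := by simpa using Finset.card_le_univ A
    push_cast [Nat.cast_sub this]; ring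
  have hbsum : ∑ i, b i = 1 := by
    rw [← Finset.sum_add_sum_compl A]
    have h1 : ∑ i ∈ A, b i = Q := by
      have : ∑ i ∈ A, b i = ∑ i ∈ A, (Real.exp (x i) / S) * Q := by
        apply Finset.sum_congr rfl
        intro i hi; rw [hb i, if_pos hi]
      rw [this, ← Finset.sum_mul]
      have : ∑ i ∈ A, Real.exp (x i) / S = 1 := by
        rw [← Finset.sum_div, ← hS, div_self hS0.ne']
      rw [this, one_mul]
    have h2 : ∑ i ∈ Aᶜ, b i = ((n:ℝ) - k) * u := by
      have : ∑ i ∈ Aᶜ, b i = ∑ _i ∈ Aᶜ, u := by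
        apply Finset.sum_congr rfl
        intro i hi
        rw [hb i, if_neg (Finset.mem_compl.mp hi)]
      rw [this, Finset.sum_const, nsmul_eq_mul, hcardc]
    rw [h1, h2, hQdef]; ring
  -- log of b on A
  set L : ℝ := Real.log Q - Real.log S with hL
  have hlogbA : ∀ i ∈ A, Real.log (b i) = x i + L := by
    intro i hi
    rw [hb i, if_pos hi, Real.log_mul (div_pos (Real.exp_pos _) hS0).ne' hQ0.ne',
      Real.log_div (Real.exp_pos _).ne' hS0.ne', Real.log_exp, hL]
    ring
  -- key bound for i ∉ A
  have hout : ∀ i ∉ A, Real.exp (x i) * Q ≤ u * S := by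
    intro i hi
    have hxi : Real.exp (x i) < u * T := by
      rw [hA, Finset.mem_filter] at hi
      push_neg at hi
      have := hi (Finset.mem_univ i)
      rwa [div_lt_iff₀ hT0] at this
    have hTS : T * Q ≤ S := by
      have hsplit : S + ∑ j ∈ Aᶜ, Real.exp (x j) = T := Finset.sum_add_sum_compl A _
      have hc : ∑ j ∈ Aᶜ, Real.exp (x j) ≤ ((n:ℝ) - k) * (u * T) := by
        calc ∑ j ∈ Aᶜ, Real.exp (x j) ≤ ∑ _j ∈ Aᶜ, u * T := by
              apply Finset.sum_le_sum
              intro j hj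
              have hj' := Finset.mem_compl.mp hj
              rw [hA, Finset.mem_filter] at hj'
              push_neg at hj'
              have := hj' (Finset.mem_univ j)
              rw [div_lt_iff₀ hT0] at this
              exact this.le
          _ = ((n:ℝ) - k) * (u * T) := by
              rw [Finset.sum_const, nsmul_eq_mul, hcardc]
      have : T * Q = T - ((n:ℝ) - k) * u * T := by rw [hQdef]; ring
      rw [this]; nlinarith
    calc Real.exp (x i) * Q ≤ (u * T) * Q := by nlinarith
      _ = u * (T * Q) := by ring
      _ ≤ u * S := by nlinarith
  -- gradient lower bound: ∀ i ∉ A, L + 1 ≤ log (b i) + 1 - x i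
  have hgrad : ∀ i ∉ A, L + 1 ≤ Real.log (b i) + 1 - x i := by
    intro i hi
    rw [hb i, if_neg hi]
    have h1 : Real.log (Real.exp (x i) * Q) ≤ Real.log (u * S) :=
      Real.log_le_log (by positivity) (hout i hi)
    rw [Real.log_mul (Real.exp_pos _).ne' hQ0.ne', Real.log_exp,
      Real.log_mul hu0.ne' hS0.ne'] at h1
    rw [hL]; linarith
  -- key: for feasible c, the linearized difference is nonneg
  have key : ∀ c : Fin n → ℝ, (∑ i, c i = 1) → (∀ i, u ≤ c i) →
      0 ≤ ∑ i, (Real.log (b i) + 1 - x i) * (c i - b i) := by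
    intro c hc1 hcu
    have termwise : ∀ i ∈ Finset.univ, (L + 1) * (c i - b i) ≤
        (Real.log (b i) + 1 - x i) * (c i - b i) := by
      intro i _
      by_cases hi : i ∈ A
      · rw [hlogbA i hi]; ring_nf; exact le_refl _
      · have h1 := hgrad i hi
        have h2 : 0 ≤ c i - b i := by
          rw [hb i, if_neg hi]; linarith [hcu i]
        nlinarith
    have hsum := Finset.sum_le_sum termwise
    have : ∑ i, (L + 1) * (c i - b i) = 0 := by
      rw [← Finset.mul_sum, Finset.sum_sub_distrib, hc1, hbsum]; ring
    linarith
  -- per-index convexity gap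
  have gap : ∀ (c : Fin n → ℝ), (∀ i, u ≤ c i) → ∀ i,
      0 ≤ (c i * Real.log (c i) - x i * c i) - (b i * Real.log (b i) - x i * b i)
        - (Real.log (b i) + 1 - x i) * (c i - b i) := by
    intro c hcu i
    have hci : 0 < c i := lt_of_lt_of_le hu0 (hcu i)
    have := gap_le (hbpos i) hci
    nlinarith
  -- minimality of b
  have hmin : ∀ c : Fin n → ℝ, (∑ i, c i = 1 ∧ ∀ i, u ≤ c i) →
      (∑ i, b i * Real.log (b i)) - (∑ i, x i * b i)
        ≤ (∑ i, c i * Real.log (c i)) - (∑ i, x i * c i) := by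
    intro c ⟨hc1, hcu⟩
    have h1 := key c hc1 hcu
    have h2 : ∑ i, (Real.log (b i) + 1 - x i) * (c i - b i) ≤
        ∑ i, ((c i * Real.log (c i) - x i * c i) - (b i * Real.log (b i) - x i * b i)) := by
      apply Finset.sum_le_sum
      intro i _
      have := gap c hcu i
      linarith
    have h3 : ∑ i, ((c i * Real.log (c i) - x i * c i) - (b i * Real.log (b i) - x i * b i))
        = ((∑ i, c i * Real.log (c i)) - (∑ i, x i * c i))
          - ((∑ i, b i * Real.log (b i)) - (∑ i, x i * b i)) := by
      rw [Finset.sum_sub_distrib, Finset.sum_sub_distrib, Finset.sum_sub_distrib]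
    linarith [h1.trans h2, h3 ▸ h1.trans h2]
  refine ⟨⟨⟨hbsum, hbu⟩, hmin⟩, ?_⟩
  -- uniqueness
  intro c ⟨hc1, hcu⟩ hcmin
  have hfcb : (∑ i, c i * Real.log (c i)) - (∑ i, x i * c i)
      = (∑ i, b i * Real.log (b i)) - (∑ i, x i * b i) :=
    le_antisymm (hcmin b ⟨hbsum, hbu⟩) (hmin c ⟨hc1, hcu⟩)
  -- the total gap sum is zero
  set G : Fin n → ℝ := fun i =>
    (c i * Real.log (c i) - x i * c i) - (b i * Real.log (b i) - x i * b i)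
      - (Real.log (b i) + 1 - x i) * (c i - b i) with hG
  have hGnonneg : ∀ i ∈ Finset.univ, 0 ≤ G i := fun i _ => gap c hcu i
  have hGsum : ∑ i, G i ≤ 0 := by
    have h1 := key c hc1 hcu
    have h2 : ∑ i, G i + ∑ i, (Real.log (b i) + 1 - x i) * (c i - b i)
        = ((∑ i, c i * Real.log (c i)) - (∑ i, x i * c i))
          - ((∑ i, b i * Real.log (b i)) - (∑ i, x i * b i)) := by
      rw [← Finset.sum_add_distrib]
      rw [show ((∑ i, c i * Real.log (c i)) - (∑ i, x i * c i))
          - ((∑ i, b i * Real.log (b i)) - (∑ i, x i * b i))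
        = ∑ i, ((c i * Real.log (c i) - x i * c i) - (b i * Real.log (b i) - x i * b i)) by
          rw [Finset.sum_sub_distrib, Finset.sum_sub_distrib, Finset.sum_sub_distrib]]
      apply Finset.sum_congr rfl
      intro i _; simp only [hG]; ring
    rw [hfcb] at h2
    simp only [sub_self] at h2
    linarith
  have hGzero : ∀ i ∈ Finset.univ, G i = 0 := by
    intro i hi
    have := (Finset.sum_eq_zero_iff_of_nonneg hGnonneg).mp
      (le_antisymm hGsum (Finset.sum_nonneg hGnonneg))
    exact this i hi
  funext i
  by_contra hne
  have hci : 0 < c i := lt_of_lt_of_le hu0 (hcu i)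
  have hlt := gap_lt (hbpos i) hci hne
  have := hGzero i (Finset.mem_univ i)
  simp only [hG] at this
  nlinarith
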